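/- If there are multiple digests d_1,...,d_t with t ≥ 2 such that for each k, the likelihood L_k = Σ_j (2c_{k,j} − C_j)·C_j exceeds a threshold T > 0, where C_j = Σ_k c_{k,j} and all c_{k,j} ≥ 0, then a contradiction follows. Hence at most one likelihood can exceed a positive threshold; i.e., MiRACLE can terminate with only a single solution being adjudged correct. -/
import Mathlib


/-- MiRACLE can terminate with only a single solution: if `t ≥ 2` digests all have
likelihood `L_k = Σ_j (2 c_{k,j} − C_j) C_j` exceeding a threshold `T > 0`, where
`C_j = Σ_k c_{k,j}` and all counts are nonnegative, a contradiction follows. -/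
theorem miracle_single_solution (m i : ℕ) (c : Fin m → Fin i → ℝ)
    (hc : ∀ k j, 0 ≤ c k j) (C : Fin i → ℝ) (hC : ∀ j, C j = ∑ k, c k j)
    (T : ℝ) (hT : 0 < T) (s : Finset (Fin m)) (hs : 2 ≤ s.card)
    (hL : ∀ k ∈ s, T < ∑ j, (2 * c k j - C j) * C j) :
    False := by
  obtain ⟨a, ha, b, hb, hab⟩ := Finset.one_lt_card.mp hs
  have hCnn : ∀ j, 0 ≤ C j := fun j => by
    rw [hC]; exact Finset.sum_nonneg fun k _ => hc k j
  have hle : ∀ j, c a j + c b j ≤ C j := fun j => by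
    rw [hC]
    have : c a j + c b j = ∑ k ∈ ({a, b} : Finset (Fin m)), c k j := by
      rw [Finset.sum_pair hab]
    rw [this]
    exact Finset.sum_le_sum_of_subset_of_nonneg (Finset.subset_univ _)
      (fun k _ _ => hc k j)
  have hsum : (∑ j, (2 * c a j - C j) * C j) + (∑ j, (2 * c b j - C j) * C j) ≤ 0 := by
    rw [← Finset.sum_add_distrib]
    apply Finset.sum_nonpos
    intro j _
    have : (2 * c a j - C j) * C j + (2 * c b j - C j) * C j
        = 2 * ((c a j + c b j) - C j) * C j := by ring
    rw [this]
    apply mul_nonpos_of_nonpos_of_nonneg _ (hCnn j)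
    nlinarith [hle j]
  have := hL a ha
  have := hL b hb
  linarith
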